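/- Let G be a group, ℚ[G] its rational group algebra and Δ its augmentation ideal. If g, h ∈ G satisfy g − 1 ∈ Δ^i and h − 1 ∈ Δ^j, then the group commutator [g,h] = g⁻¹h⁻¹gh satisfies [g,h] − 1 ∈ Δ^{i+j}. In particular, [D_iG, D_jG] ⊆ D_{i+j}G, so the group commutator induces a well-defined bracket on the graded abelian group ⊕_{i>0} D_iG/D_{i+1}G. -/

import Mathlib

/-- The augmentation map `ℚ[G] → ℚ`, sending each `g ∈ G` to `1`. -/
noncomputable def augMap (G : Type*) [Group G] : MonoidAlgebra ℚ G →ₐ[ℚ] ℚ :=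
  MonoidAlgebra.lift ℚ ℚ G 1

/-- The augmentation ideal `Δ ⊆ ℚ[G]`. -/
noncomputable def augIdeal (G : Type*) [Group G] : Ideal (MonoidAlgebra ℚ G) :=
  RingHom.ker (augMap G)

lemma augIdeal_mul_right (G : Type*) [Group G] {x : MonoidAlgebra ℚ G}
    (hx : x ∈ augIdeal G) (r : MonoidAlgebra ℚ G) : x * r ∈ augIdeal G := by
  rw [augIdeal, RingHom.mem_ker] at hx ⊢
  rw [map_mul, hx, zero_mul]

lemma augIdeal_pow_mul_right (G : Type*) [Group G] (n : ℕ) {x : MonoidAlgebra ℚ G}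
    (hx : x ∈ augIdeal G ^ n) (r : MonoidAlgebra ℚ G) : x * r ∈ augIdeal G ^ n := by
  induction n with
  | zero =>
    rw [Submodule.pow_zero, Ideal.one_eq_top]
    trivial
  | succ n _ =>
    rw [Submodule.pow_succ] at hx ⊢
    refine Submodule.smul_induction_on (p := fun y => y * r ∈ augIdeal G ^ n • augIdeal G) hx
      (fun a ha b hb => ?_) (fun y z hy hz => ?_)
    · show a * b * r ∈ _
      rw [mul_assoc]
      exact Submodule.smul_mem_smul ha (augIdeal_mul_right G hb r)
    · beta_reduce
      rw [add_mul]
      exact Submodule.add_mem _ hy hz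

lemma mul_mem_augIdeal_pow_add (G : Type*) [Group G] (i j : ℕ) {x y : MonoidAlgebra ℚ G}
    (hx : x ∈ augIdeal G ^ i) (hy : y ∈ augIdeal G ^ j) :
    x * y ∈ augIdeal G ^ (i + j) := by
  induction j generalizing y with
  | zero =>
    rw [Nat.add_zero]
    exact augIdeal_pow_mul_right G i hx y
  | succ n ih =>
    rw [Submodule.pow_succ] at hy
    rw [Nat.add_succ, Submodule.pow_succ]
    refine Submodule.smul_induction_on
      (p := fun y => x * y ∈ augIdeal G ^ (i + n) • augIdeal G) hy
      (fun a ha b hb => ?_) (fun y z hy hz => ?_)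
    · show x * (a * b) ∈ _
      rw [← mul_assoc]
      exact Submodule.smul_mem_smul (ih ha) hb
    · beta_reduce
      rw [mul_add]
      exact Submodule.add_mem _ hy hz

/-- If `g - 1 ∈ Δ^i` and `h - 1 ∈ Δ^j`, then the group commutator
`[g,h] = g⁻¹h⁻¹gh` satisfies `[g,h] - 1 ∈ Δ^{i+j}`; in particular
`[D_i G, D_j G] ⊆ D_{i+j} G`. -/
theorem commutator_dimension_subgroup (G : Type*) [Group G] (i j : ℕ) (g h : G)
    (hg : MonoidAlgebra.of ℚ G g - 1 ∈ augIdeal G ^ i)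
    (hh : MonoidAlgebra.of ℚ G h - 1 ∈ augIdeal G ^ j) :
    MonoidAlgebra.of ℚ G (g⁻¹ * h⁻¹ * g * h) - 1 ∈ augIdeal G ^ (i + j) := by
  have h1 : (MonoidAlgebra.of ℚ G g - 1) * (MonoidAlgebra.of ℚ G h - 1) ∈
      augIdeal G ^ (i + j) := mul_mem_augIdeal_pow_add G i j hg hh
  have h2 : (MonoidAlgebra.of ℚ G h - 1) * (MonoidAlgebra.of ℚ G g - 1) ∈
      augIdeal G ^ (i + j) := by
    rw [Nat.add_comm]
    exact mul_mem_augIdeal_pow_add G j i hh hg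
  have key : MonoidAlgebra.of ℚ G (g * h) - MonoidAlgebra.of ℚ G (h * g) ∈
      augIdeal G ^ (i + j) := by
    have := Ideal.sub_mem _ h1 h2
    rw [map_mul, map_mul]
    convert this using 1
    noncomm_ring
  have := Ideal.mul_mem_left _ (MonoidAlgebra.of ℚ G (g⁻¹ * h⁻¹)) key
  convert this using 1
  rw [mul_sub, ← map_mul, ← map_mul]
  congr 1
  · congr 1
    group
  · rw [show g⁻¹ * h⁻¹ * (h * g) = 1 by group, map_one]
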